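/- In the instance with n ≥ 2 actions {⊥,1,...,n−1}, f(j)=2^{j+1}/2^n and c(j)=(2^{j+1}−j−1)/2^n for j ≥ 1, f(⊥)=c(⊥)=0, and no inspection: if contract α ∈ [0,1] incentivizes the agent to take action j ≥ 1 (i.e., α·f(j) − c(j) ≥ α·f(ℓ) − c(ℓ) for all ℓ, including ℓ = j−1 if j ≥ 2, with action 0 interpreted as ⊥), then α ≥ 1 − 1/2^j, and hence the principal's utility (1−α)·f(j) is at most 2/2^n. -/

import Mathlib

theorem stmt12 (n : ℕ) (hn : 2 ≤ n) :
    let f : Fin n → ℝ := fun j => if (j : ℕ) = 0 then 0 else 2 ^ ((j : ℕ) + 1) / 2 ^ n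
    let c : Fin n → ℝ := fun j =>
      if (j : ℕ) = 0 then 0 else (2 ^ ((j : ℕ) + 1) - (j : ℕ) - 1) / 2 ^ n
    ∀ α ∈ Set.Icc (0 : ℝ) 1, ∀ j : Fin n, 1 ≤ (j : ℕ) →
      (∀ ℓ : Fin n, α * f ℓ - c ℓ ≤ α * f j - c j) →
      1 - 1 / 2 ^ (j : ℕ) ≤ α ∧ (1 - α) * f j ≤ 2 / 2 ^ n := by
  intro f c α hα j hj hbest
  obtain ⟨hα0, hα1⟩ := hα
  have hk0 : (j : ℕ) ≠ 0 := by omega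
  have hpn : (0:ℝ) < 2 ^ n := by positivity
  have hne : ((2:ℝ) ^ n) ≠ 0 := hpn.ne'
  have hpk : (0:ℝ) < 2 ^ (j : ℕ) := by positivity
  -- key inequality: 2^k - 1 ≤ α * 2^k
  have key : (2:ℝ) ^ (j : ℕ) - 1 ≤ α * 2 ^ (j : ℕ) := by
    rcases eq_or_lt_of_le hj with h1 | h2
    · -- (j:ℕ) = 1, compare with action 0
      have hk1 : (j : ℕ) = 1 := h1.symm
      have h := hbest ⟨0, by omega⟩
      simp only [f, c, Fin.val_mk, if_pos rfl, if_neg hk0, hk1] at h ⊢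
      norm_num at h ⊢
      field_simp at h
      linarith
    · -- (j:ℕ) ≥ 2, compare with action (j:ℕ) - 1
      have h := hbest ⟨(j : ℕ) - 1, by omega⟩
      have hne1 : (j : ℕ) - 1 ≠ 0 := by omega
      simp only [f, c, Fin.val_mk, if_neg hne1, if_neg hk0] at h
      have hs : (j : ℕ) - 1 + 1 = (j : ℕ) := by omega
      have hcast : (((j : ℕ) - 1 : ℕ) : ℝ) = ((j : ℕ) : ℝ) - 1 := by
        have h1 : (1:ℕ) ≤ (j : ℕ) := hj
        push_cast [h1]; ring
      rw [hs, hcast] at h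
      field_simp at h
      have hpow : (2:ℝ) ^ ((j : ℕ) + 1) = 2 * 2 ^ (j : ℕ) := by rw [pow_succ]; ring
      nlinarith [h, hpn]
  have h1 : 1 - α ≤ 1 / 2 ^ (j : ℕ) := by
    rw [le_div_iff₀ hpk]; nlinarith
  refine ⟨by linarith, ?_⟩
  have hfj : f j = 2 ^ ((j : ℕ) + 1) / 2 ^ n := by simp [f, hk0]
  rw [hfj]
  have h2 : (0:ℝ) ≤ 2 ^ ((j : ℕ) + 1) / 2 ^ n := by positivity
  calc (1 - α) * (2 ^ ((j : ℕ) + 1) / 2 ^ n)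
      ≤ (1 / 2 ^ (j : ℕ)) * (2 ^ ((j : ℕ) + 1) / 2 ^ n) :=
        mul_le_mul_of_nonneg_right h1 h2
    _ = 2 / 2 ^ n := by rw [pow_succ]; field_simp
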